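/- Let a ∈ (0,2) with a ≠ 1 and let λ > 0, μ > 0. Then the function x ↦ (exp(−λx)·(−(λ−μ)x − 1) + exp(−μx))·x^(−a−1) is integrable on (0,∞) and ∫₀^∞ (exp(−λx)·(−(λ−μ)x − 1) + exp(−μx))·x^(−a−1) dx = Γ(−a)·((a−1)·λ^a − a·μ·λ^(a−1) + μ^a). -/

import Mathlib

open MeasureTheory Real Set
set_option maxHeartbeats 1000000

lemma intOn_aux {s b : ℝ} (hs : -1 < s) (hb : 0 < b) :
    IntegrableOn (fun x : ℝ => x ^ s * exp (-(b * x))) (Ioi 0) := by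
  refine (integrableOn_rpow_mul_exp_neg_mul_rpow hs zero_lt_one hb).congr_fun
    (fun x hx => ?_) measurableSet_Ioi
  beta_reduce
  rw [Real.rpow_one, neg_mul]

lemma intVal_aux {s b : ℝ} (hs : -1 < s) (hb : 0 < b) :
    ∫ x in Ioi (0:ℝ), x ^ s * exp (-(b * x)) = (1/b) ^ (s+1) * Gamma (s+1) := by
  have := Real.integral_rpow_mul_exp_neg_mul_Ioi (by linarith : 0 < s + 1) hb
  simpa using this

lemma inner_aux {a b : ℝ} (ha₂ : a < 2) (hb : 0 < b) (r : ℝ) :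
    ∫ x in Ioi (0:ℝ), r * exp (-(b*x)) * x ^ (1-a)
      = r * ((1/b) ^ (2-a) * Gamma (2-a)) := by
  rw [show (fun x : ℝ => r * exp (-(b*x)) * x ^ (1-a))
      = fun x => r * (x ^ (1-a) * exp (-(b*x))) from funext fun x => by ring]
  rw [MeasureTheory.integral_const_mul, intVal_aux (by linarith) hb,
    show (1:ℝ) - a + 1 = 2 - a by ring]

lemma taylor_aux (l c x : ℝ) :
    exp (-(l * x)) * (-(-c) * x - 1) + exp (-((l + c) * x))
      = c^2 * x^2 * ∫ t in (0:ℝ)..1, (1-t) * exp (-((l + t*c) * x)) := by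
  rcases eq_or_ne (c * x) 0 with h | h
  · rcases mul_eq_zero.1 h with rfl | rfl
    · simp
    · simp
  · have hc : c ≠ 0 := fun hc => h (by simp [hc])
    have hx : x ≠ 0 := fun hx => h (by simp [hx])
    set B : ℝ := 1 / (c * x) with hB
    set A : ℝ := (1 / (c * x) - 1) / (c * x) with hA
    have key : ∀ t : ℝ, HasDerivAt (fun t => exp (-((l + t*c) * x)) * (A + B * t))
        ((1 - t) * exp (-((l + t*c) * x))) t := by
      intro t
      have h1 : HasDerivAt (fun t : ℝ => -((l + t*c) * x)) (-(c * x)) t := by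
        have : HasDerivAt (fun t : ℝ => l + t*c) c t := by
          simpa using ((hasDerivAt_id t).mul_const c).const_add l
        exact (this.mul_const x).neg
      have h2 := (h1.exp).mul ((hasDerivAt_id t).const_mul B |>.const_add A)
      have hkey : -(c*x)*(A+B*t) + B = 1 - t := by
        rw [hA, hB]; field_simp; ring
      refine h2.congr_deriv ?_
      simp only [id_eq, mul_one]
      rw [show rexp (-((l + t * c) * x)) * -(c * x) * (A + B * t) +
          rexp (-((l + t * c) * x)) * B
          = (-(c*x)*(A+B*t) + B) * rexp (-((l + t * c) * x)) by ring, hkey]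
    rw [intervalIntegral.integral_eq_sub_of_hasDerivAt (fun t _ => key t)
      (((continuous_const.sub continuous_id).mul
        (((continuous_const.add (continuous_id.mul continuous_const)).mul
          continuous_const).neg.rexp)).intervalIntegrable 0 1)]
    simp only [hA, hB]
    field_simp
    ring

lemma tint_aux {a l c : ℝ} (ha₀ : 0 < a) (ha₁ : a ≠ 1) (hc : c ≠ 0)
    (hl : 0 < l) (hlc : 0 < l + c) :
    ∫ t in (0:ℝ)..1, (1-t) * (l + t*c) ^ (a-2)
      = (l+c)^a / (c^2*a*(a-1)) - (l^(a-1) / (c*(a-1)) + l^a / (c^2*a*(a-1))) := by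
  have ha1 : a - 1 ≠ 0 := sub_ne_zero.2 ha₁
  have hpos : ∀ t ∈ uIcc (0:ℝ) 1, 0 < l + t*c := by
    intro t ht
    rw [uIcc_of_le (by norm_num)] at ht
    rcases lt_or_ge 0 t with h0 | h0
    · nlinarith [mul_pos h0 hlc, mul_nonneg (sub_nonneg.2 ht.2) hl.le]
    · have : t = 0 := le_antisymm h0 ht.1
      simpa [this] using hl
  set H : ℝ → ℝ := fun t => (l+t*c)^(a-1) * (1-t) / (c*(a-1)) + (l+t*c)^a / (c^2*a*(a-1))
    with hH
  have key : ∀ t ∈ uIcc (0:ℝ) 1, HasDerivAt H ((1-t) * (l + t*c) ^ (a-2)) t := by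
    intro t ht
    have hb : 0 < l + t*c := hpos t ht
    have hlin : HasDerivAt (fun t : ℝ => l + t*c) c t := by
      simpa using ((hasDerivAt_id t).mul_const c).const_add l
    have h1 : HasDerivAt (fun t => (l+t*c)^(a-1))
        (c * (a-1) * (l+t*c)^(a-1-1)) t := by
      simpa using hlin.rpow_const (Or.inl hb.ne')
    have h2 : HasDerivAt (fun t => (l+t*c)^a) (c * a * (l+t*c)^(a-1)) t := by
      simpa using hlin.rpow_const (Or.inl hb.ne')
    have h3 := ((h1.mul ((hasDerivAt_id t).const_sub 1)).div_const (c*(a-1))).add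
      (h2.div_const (c^2*a*(a-1)))
    refine h3.congr_deriv ?_
    have e1 : a - 1 - 1 = a - 2 := by ring
    rw [e1, id_eq]
    field_simp
    ring
  have hcont : IntervalIntegrable (fun t => (1-t) * (l + t*c) ^ (a-2)) volume 0 1 := by
    apply ContinuousOn.intervalIntegrable
    exact (continuous_const.sub continuous_id).continuousOn.mul
      (((continuous_const.add (continuous_id.mul continuous_const)).continuousOn).rpow_const
        (fun t ht => Or.inl (hpos t ht).ne'))
  rw [intervalIntegral.integral_eq_sub_of_hasDerivAt key hcont]
  simp only [hH]
  norm_num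

lemma fubini_int {a l c : ℝ} (ha₂ : a < 2) (hl : 0 < l) (hlc : 0 < l + c) :
    Integrable (fun p : ℝ × ℝ => (1 - p.2) * exp (-((l + p.2*c) * p.1)) * p.1 ^ (1-a))
      ((volume.restrict (Ioi 0)).prod (volume.restrict (Ioc 0 1))) := by
  have hbpos : ∀ t ∈ Ioc (0:ℝ) 1, 0 < l + t*c := by
    intro t ht
    nlinarith [mul_pos ht.1 hlc, mul_nonneg (sub_nonneg.2 ht.2) hl.le]
  have hmeas : AEStronglyMeasurable
      (fun p : ℝ × ℝ => (1 - p.2) * exp (-((l + p.2*c) * p.1)) * p.1 ^ (1-a))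
      ((volume.restrict (Ioi 0)).prod (volume.restrict (Ioc 0 1))) := by
    apply Measurable.aestronglyMeasurable
    exact ((measurable_const.sub measurable_snd).mul
        (((measurable_const.add (measurable_snd.mul measurable_const)).mul
          measurable_fst).neg.exp)).mul (measurable_fst.pow_const _)
  rw [MeasureTheory.integrable_prod_iff' hmeas]
  constructor
  · filter_upwards [ae_restrict_mem measurableSet_Ioc] with t ht
    have hb := hbpos t ht
    exact ((intOn_aux (show (-1:ℝ) < 1 - a by linarith) hb).const_mul (1-t)).congr
      (Filter.Eventually.of_forall fun x => by ring)
  · have hg : IntegrableOn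
        (fun t : ℝ => (1-t) * ((1/(l + t*c)) ^ (2-a) * Gamma (2-a))) (Ioc 0 1) := by
      apply (ContinuousOn.integrableOn_Icc ?_).mono_set Ioc_subset_Icc_self
      have hb : ∀ t ∈ Icc (0:ℝ) 1, l + t*c ≠ 0 := by
        intro t ht
        rcases lt_or_ge 0 t with h0 | h0
        · nlinarith [mul_pos h0 hlc, mul_nonneg (sub_nonneg.2 ht.2) hl.le]
        · have : t = 0 := le_antisymm h0 ht.1
          simp [this]; positivity
      refine (continuous_const.sub continuous_id).continuousOn.mul
        ((ContinuousOn.rpow_const ?_ (fun t ht => Or.inl ?_)).mul continuousOn_const)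
      · exact (continuousOn_const.div
          ((continuous_const.add (continuous_id.mul continuous_const)).continuousOn)
          (hb))
      · simp only [one_div, ne_eq, inv_eq_zero]
        exact hb t ht
    refine hg.congr ?_
    filter_upwards [ae_restrict_mem measurableSet_Ioc] with t ht
    have hb := hbpos t ht
    have h1 : ∫ x in Ioi (0:ℝ),
        ‖(1-t) * exp (-((l + t*c) * x)) * x ^ (1-a)‖
        = ∫ x in Ioi (0:ℝ), (1-t) * exp (-((l + t*c) * x)) * x ^ (1-a) := by
      refine setIntegral_congr_fun measurableSet_Ioi (fun x hx => ?_)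
      exact norm_of_nonneg (by
        have := Real.rpow_nonneg (le_of_lt (mem_Ioi.1 hx)) (1-a)
        have h1t : 0 ≤ 1 - t := by linarith [ht.2]
        positivity)
    rw [h1, inner_aux ha₂ hb]

lemma main_aux (a l c : ℝ)
    (ha₀ : 0 < a) (ha₂ : a < 2) (ha₁ : a ≠ 1) (hl : 0 < l)
    (hcne : c ≠ 0) (hlc : 0 < l + c) :
    IntegrableOn
      (fun x : ℝ =>
        (exp (-(l * x)) * (-(l - (l+c)) * x - 1) + exp (-((l+c) * x))) * x ^ (-a - 1))
      (Ioi 0) ∧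
    ∫ x in Ioi (0:ℝ),
        (exp (-(l * x)) * (-(l - (l+c)) * x - 1) + exp (-((l+c) * x))) * x ^ (-a - 1)
      = Gamma (-a) * ((a - 1) * l ^ a - a * (l+c) * l ^ (a - 1) + (l+c) ^ a) := by
  have ha : a ≠ 0 := ha₀.ne'
  have ha1 : a - 1 ≠ 0 := sub_ne_zero.2 ha₁
  have hF := fubini_int (a := a) (l := l) (c := c) ha₂ hl hlc
  -- pointwise identity on Ioi 0
  have hpt : ∀ x ∈ Ioi (0:ℝ),
      (exp (-(l * x)) * (-(l - (l+c)) * x - 1) + exp (-((l+c) * x))) * x ^ (-a - 1)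
        = c^2 * ∫ t in Ioc (0:ℝ) 1, (1-t) * exp (-((l + t*c) * x)) * x ^ (1-a) := by
    intro x hx
    have hx0 : (0:ℝ) < x := hx
    have hxp : (x:ℝ)^(2:ℕ) * x ^ (-a-1) = x ^ ((1:ℝ)-a) := by
      rw [← Real.rpow_natCast x 2, ← Real.rpow_add hx0]
      norm_num
      rw [show (2:ℝ) + (-a - 1) = 1 - a by ring]
    have ht := taylor_aux l c x
    rw [show -(l - (l+c)) = -(-c) by ring]
    rw [ht, intervalIntegral.integral_of_le (by norm_num : (0:ℝ) ≤ 1)]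
    rw [show (fun t => (1-t) * exp (-((l + t*c) * x)) * x ^ ((1:ℝ)-a))
        = fun t => ((1-t) * exp (-((l + t*c) * x))) * x ^ ((1:ℝ)-a) from
          funext fun t => by ring,
      MeasureTheory.integral_mul_const, ← hxp]
    ring
  have hIPL : Integrable (fun x : ℝ => ∫ t in Ioc (0:ℝ) 1,
      (1 - t) * exp (-((l + t*c) * x)) * x ^ (1-a)) (volume.restrict (Ioi 0)) :=
    hF.integral_prod_left
  constructor
  · refine (hIPL.const_mul (c^2)).congr ?_
    filter_upwards [ae_restrict_mem measurableSet_Ioi] with x hx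
    exact (hpt x hx).symm
  · have hcongr := setIntegral_congr_fun (μ := volume) measurableSet_Ioi hpt
    rw [hcongr, MeasureTheory.integral_const_mul]
    have hswap := MeasureTheory.integral_integral_swap
      (f := fun x t => (1-t) * exp (-((l + t*c) * x)) * x ^ (1-a))
      (μ := volume.restrict (Ioi 0)) (ν := volume.restrict (Ioc (0:ℝ) 1)) hF
    beta_reduce at hswap
    rw [hswap]
    have hinner : ∀ t ∈ Ioc (0:ℝ) 1,
        (∫ x in Ioi (0:ℝ), (1-t) * exp (-((l + t*c) * x)) * x ^ (1-a))
          = Gamma (2-a) * ((1-t) * (l + t*c) ^ (a-2)) := by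
      intro t ht
      have hb : 0 < l + t*c := by
        nlinarith [mul_pos ht.1 hlc, mul_nonneg (sub_nonneg.2 ht.2) hl.le]
      rw [inner_aux ha₂ hb]
      have e : (1/(l + t*c)) ^ (2-a) = (l + t*c) ^ (a-2) := by
        rw [one_div, Real.inv_rpow hb.le, ← Real.rpow_neg hb.le,
          show -(2-a) = a - 2 by ring]
      rw [e]; ring
    rw [setIntegral_congr_fun measurableSet_Ioc hinner, MeasureTheory.integral_const_mul]
    rw [← intervalIntegral.integral_of_le (by norm_num : (0:ℝ) ≤ 1)]
    rw [tint_aux ha₀ ha₁ hcne hl hlc]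
    have hg2 : Gamma (2-a) = (1-a) * (-a * Gamma (-a)) := by
      rw [show (2:ℝ) - a = (1-a) + 1 by ring,
        Real.Gamma_add_one (sub_ne_zero.2 (Ne.symm ha₁)),
        show (1:ℝ) - a = -a + 1 by ring, Real.Gamma_add_one (by simpa using ha)]
    have hll : l * l ^ (a-1) = l ^ a := by
      have h2 : l ^ a = l ^ (1:ℝ) * l ^ (a-1) := by
        rw [← Real.rpow_add hl]; norm_num
      rw [h2, Real.rpow_one]
    rw [hg2, show Gamma (-a) * ((a - 1) * l ^ a - a * (l+c) * l ^ (a - 1) + (l+c) ^ a)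
        = Gamma (-a) * ((a - 1) * l ^ a - a * (l * l ^ (a-1)) - a * c * l ^ (a-1) + (l+c) ^ a)
        by ring, hll]
    field_simp
    ring

/-- Positive half-line building block of the Kullback–Leibler divergence between
two exponentially tempered stable (GTS/CTS) Lévy processes. -/
theorem gts_kl_divergence_halfline (a l m : ℝ)
    (ha₀ : 0 < a) (ha₂ : a < 2) (ha₁ : a ≠ 1) (hl : 0 < l) (hm : 0 < m) :
    IntegrableOn
      (fun x : ℝ =>
        (exp (-(l * x)) * (-(l - m) * x - 1) + exp (-(m * x))) * x ^ (-a - 1))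
      (Ioi 0) ∧
    ∫ x in Ioi (0:ℝ),
        (exp (-(l * x)) * (-(l - m) * x - 1) + exp (-(m * x))) * x ^ (-a - 1)
      = Gamma (-a) * ((a - 1) * l ^ a - a * m * l ^ (a - 1) + m ^ a) := by
  have ha : a ≠ 0 := ha₀.ne'
  rcases eq_or_ne m l with rfl | hne
  · -- degenerate case m = l: integrand is zero, RHS is zero
    have hz : ∀ x : ℝ,
        (exp (-(m * x)) * (-(m - m) * x - 1) + exp (-(m * x))) * x ^ (-a - 1) = 0 := by
      intro x; simp
    have hml : m * m ^ (a-1) = m ^ a := by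
      have h2 : m ^ a = m ^ (1:ℝ) * m ^ (a-1) := by
        rw [← Real.rpow_add hm]; norm_num
      rw [h2, Real.rpow_one]
    constructor
    · exact (integrable_zero _ _ _).congr
        (Filter.Eventually.of_forall fun x => (hz x).symm)
    · rw [show (fun x : ℝ =>
          (exp (-(m * x)) * (-(m - m) * x - 1) + exp (-(m * x))) * x ^ (-a - 1))
          = fun _ => (0:ℝ) from funext hz]
      rw [integral_zero]
      rw [show (a - 1) * m ^ a - a * m * m ^ (a - 1) + m ^ a
          = (a - 1) * m ^ a - a * (m * m ^ (a - 1)) + m ^ a by ring, hml]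
      ring
  · have key := main_aux a l (m - l) ha₀ ha₂ ha₁ hl (sub_ne_zero.2 hne)
      (by linarith : 0 < l + (m - l))
    rw [show m = l + (m - l) by ring]
    exact key
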